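/- Let N ∈ ℕ with N ≥ 3, J > 0, h ≠ 0, ρ > 0, and ε < h²/(2J). Define m_± := −h/J ± √(h²/J² − 2ε/J) and assume m_+² < ρ and m_−² < ρ. Set m := −h/J + sgn(h)·√(h²/J² − 2ε/J), and let μ_MC^{ε,ρ;N} be the microcanonical energy ensemble. Then for every measurable f : ℝ^Λ → ℝ with ∫|f| dμ_MC^{m_+,ρ;N} ≤ K and ∫|f| dμ_MC^{m_−,ρ;N} ≤ K for some K ≥ 0, one has |∫ f dμ_MC^{ε,ρ;N} − ∫ f dμ_MC^{m,ρ;N}| ≤ 2K · | ( ρ − (|h|/J + √(h²/J² − 2ε/J))² ) / ( ρ − (|h|/J − √(h²/J² − 2ε/J))² ) |^{(N−3)/2}, and the ratio inside the absolute value has modulus strictly less than one, so the error is exponentially small in N. -/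

import Mathlib

open MeasureTheory ProbabilityTheory Matrix

/-- The specific `p`-norm fluctuation distance `w_p(μ₁, μ₂; N)`:
the infimum over all couplings `γ` of `μ₁` and `μ₂` of
`∫ (1/N) ∑ᵢ |xᵢ - yᵢ|^p dγ`, raised to the power `1/p`. -/
noncomputable def fluctDist (p : ℝ) (N : ℕ) (μ₁ μ₂ : Measure (Fin N → ℝ)) : ℝ :=
  sInf {c : ℝ | ∃ γ : Measure ((Fin N → ℝ) × (Fin N → ℝ)), IsProbabilityMeasure γ ∧
      γ.map Prod.fst = μ₁ ∧ γ.map Prod.snd = μ₂ ∧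
      c = ∫ xy, (N : ℝ)⁻¹ * ∑ i, |xy.1 i - xy.2 i| ^ p ∂γ} ^ (1 / p)

/-- The standard Gaussian measure on `ℝ^N`. -/
noncomputable def stdGaussian (N : ℕ) : Measure (Fin N → ℝ) :=
  Measure.pi fun _ => gaussianReal 0 1

/-- `U` is an orthogonal matrix such that the first coordinate of `U x` is
`N^{-1/2} ∑ᵢ xᵢ`. -/
def GoodRotation {N : ℕ} (hN : 0 < N) (U : Matrix (Fin N) (Fin N) ℝ) : Prop :=
  Uᵀ * U = 1 ∧ ∀ x : Fin N → ℝ, U.mulVec x ⟨0, hN⟩ = (∑ i, x i) / Real.sqrt N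

/-- The auxiliary microcanonical ensemble `μ_MC^{m,ρ;N}` with magnetization density `m` and
particle density `ρ`: the pushforward under `U⁻¹` of the product of the Dirac mass at `m √N`
in the first coordinate with the uniform probability measure on the sphere of radius
`√(N(ρ − m²))` in the remaining `N − 1` coordinates.  The uniform sphere measure is realized
as the pushforward of the standard Gaussian on the remaining coordinates under radial
normalization. -/
noncomputable def mcSpherical {N : ℕ} (hN : 0 < N) (U : Matrix (Fin N) (Fin N) ℝ)
    (m ρ : ℝ) : Measure (Fin N → ℝ) :=
  (stdGaussian N).map fun x =>
    U⁻¹.mulVec fun i =>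
      if i = ⟨0, hN⟩ then m * Real.sqrt N
      else Real.sqrt (N * (ρ - m ^ 2)) * x i /
        Real.sqrt (∑ j ∈ Finset.univ.filter (fun j => j ≠ (⟨0, hN⟩ : Fin N)), x j ^ 2)

/-- The specific auxiliary microcanonical partition function
`Z_MC(m,ρ;N) = (ρ − m²)^{(N−3)/2}`. -/
noncomputable def Zmc (N : ℕ) (m ρ : ℝ) : ℝ :=
  (ρ - m ^ 2) ^ (((N : ℝ) - 3) / 2)

/-- The microcanonical energy ensemble `μ_MC^{ε,ρ;N}` for `h ≠ 0`, `ε < h²/(2J)` and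
`m_±² < ρ`: the convex combination of the two fixed magnetization ensembles `μ_MC^{m_±,ρ;N}`
with weights `Z_MC(m_±,ρ;N)/(Z_MC(m_+,ρ;N) + Z_MC(m_−,ρ;N))`. -/
noncomputable def mcEnergy {N : ℕ} (hN : 0 < N) (U : Matrix (Fin N) (Fin N) ℝ)
    (J h ρ ε : ℝ) : Measure (Fin N → ℝ) :=
  let mp := -h / J + Real.sqrt (h ^ 2 / J ^ 2 - 2 * ε / J)
  let mm := -h / J - Real.sqrt (h ^ 2 / J ^ 2 - 2 * ε / J)
  ENNReal.ofReal (Zmc N mp ρ / (Zmc N mp ρ + Zmc N mm ρ)) • mcSpherical hN U mp ρ +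
    ENNReal.ofReal (Zmc N mm ρ / (Zmc N mp ρ + Zmc N mm ρ)) • mcSpherical hN U mm ρ


private lemma core_combo {α : Type*} [MeasurableSpace α] (μg μb : Measure α)
    (f : α → ℝ) (hig : Integrable f μg) (hib : Integrable f μb) (K : ℝ)
    (hKg : ∫ x, |f x| ∂μg ≤ K) (hKb : ∫ x, |f x| ∂μb ≤ K)
    (Zg Zb : ℝ) (hZg : 0 < Zg) (hZb : 0 < Zb) :
    |(∫ x, f x ∂(ENNReal.ofReal (Zg / (Zg + Zb)) • μg +
        ENNReal.ofReal (Zb / (Zg + Zb)) • μb)) - ∫ x, f x ∂μg| ≤ 2 * K * (Zb / Zg) := by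
  have hS : 0 < Zg + Zb := by linarith
  set wg : ℝ := Zg / (Zg + Zb) with hwg_def
  set wb : ℝ := Zb / (Zg + Zb) with hwb_def
  have hwg : 0 ≤ wg := by positivity
  have hwb : 0 ≤ wb := by positivity
  have hsum : wg + wb = 1 := by
    rw [hwg_def, hwb_def, ← add_div, div_self hS.ne']
  have hIg := norm_integral_le_integral_norm (μ := μg) f
  have hIb := norm_integral_le_integral_norm (μ := μb) f
  simp only [Real.norm_eq_abs] at hIg hIb
  have hint : ∫ x, f x ∂(ENNReal.ofReal wg • μg + ENNReal.ofReal wb • μb) =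
      wg * ∫ x, f x ∂μg + wb * ∫ x, f x ∂μb := by
    rw [integral_add_measure (hig.smul_measure ENNReal.ofReal_ne_top)
      (hib.smul_measure ENNReal.ofReal_ne_top), integral_smul_measure, integral_smul_measure,
      ENNReal.toReal_ofReal hwg, ENNReal.toReal_ofReal hwb, smul_eq_mul, smul_eq_mul]
  rw [hint]
  have hkey : wg * (∫ x, f x ∂μg) + wb * (∫ x, f x ∂μb) - ∫ x, f x ∂μg =
      wb * ((∫ x, f x ∂μb) - ∫ x, f x ∂μg) := by
    have : wg = 1 - wb := by linarith
    rw [this]; try ring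
  rw [hkey, abs_mul, abs_of_nonneg hwb]
  have h1 : |(∫ x, f x ∂μb) - ∫ x, f x ∂μg| ≤ 2 * K := by
    calc |(∫ x, f x ∂μb) - ∫ x, f x ∂μg| ≤ |∫ x, f x ∂μb| + |∫ x, f x ∂μg| := abs_sub _ _
    _ ≤ 2 * K := by linarith
  have h2 : wb ≤ Zb / Zg := by
    rw [hwb_def, div_le_div_iff₀ hS hZg]
    nlinarith
  calc wb * |(∫ x, f x ∂μb) - ∫ x, f x ∂μg| ≤ (Zb / Zg) * (2 * K) := by
        apply mul_le_mul h2 h1 (abs_nonneg _) (by positivity)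
    _ = 2 * K * (Zb / Zg) := by ring

theorem stmt13 (N : ℕ) (hN : 0 < N) (hN3 : 3 ≤ N) (J h ρ ε : ℝ)
    (hJ : 0 < J) (hh : h ≠ 0) (hρ : 0 < ρ) (hε : ε < h ^ 2 / (2 * J))
    (hmp2 : (-h / J + Real.sqrt (h ^ 2 / J ^ 2 - 2 * ε / J)) ^ 2 < ρ)
    (hmm2 : (-h / J - Real.sqrt (h ^ 2 / J ^ 2 - 2 * ε / J)) ^ 2 < ρ)
    (U : Matrix (Fin N) (Fin N) ℝ) (hU : GoodRotation hN U)
    (m : ℝ) (hm : m = -h / J + Real.sign h * Real.sqrt (h ^ 2 / J ^ 2 - 2 * ε / J))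
    (f : (Fin N → ℝ) → ℝ) (hf : Measurable f) (K : ℝ) (hK : 0 ≤ K)
    (hintp : Integrable f (mcSpherical hN U (-h / J + Real.sqrt (h ^ 2 / J ^ 2 - 2 * ε / J)) ρ))
    (hintm : Integrable f (mcSpherical hN U (-h / J - Real.sqrt (h ^ 2 / J ^ 2 - 2 * ε / J)) ρ))
    (hKp : ∫ x, |f x| ∂(mcSpherical hN U (-h / J + Real.sqrt (h ^ 2 / J ^ 2 - 2 * ε / J)) ρ) ≤ K)
    (hKm : ∫ x, |f x| ∂(mcSpherical hN U (-h / J - Real.sqrt (h ^ 2 / J ^ 2 - 2 * ε / J)) ρ) ≤ K) :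
    |(∫ x, f x ∂(mcEnergy hN U J h ρ ε)) - ∫ x, f x ∂(mcSpherical hN U m ρ)| ≤
        2 * K * |(ρ - (|h| / J + Real.sqrt (h ^ 2 / J ^ 2 - 2 * ε / J)) ^ 2) /
            (ρ - (|h| / J - Real.sqrt (h ^ 2 / J ^ 2 - 2 * ε / J)) ^ 2)| ^ (((N : ℝ) - 3) / 2) ∧
      |(ρ - (|h| / J + Real.sqrt (h ^ 2 / J ^ 2 - 2 * ε / J)) ^ 2) /
          (ρ - (|h| / J - Real.sqrt (h ^ 2 / J ^ 2 - 2 * ε / J)) ^ 2)| < 1 := by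
  set s := Real.sqrt (h ^ 2 / J ^ 2 - 2 * ε / J) with hs_def
  have harg : 0 < h ^ 2 / J ^ 2 - 2 * ε / J := by
    have h1 : ε * (2 * J) < h ^ 2 := by
      rw [← lt_div_iff₀ (by positivity)]; exact hε
    rw [sub_pos, div_lt_div_iff₀ hJ (by positivity)]
    nlinarith
  have hs : 0 < s := Real.sqrt_pos.mpr harg
  have ha : 0 < |h| / J := div_pos (abs_pos.mpr hh) hJ
  have hAρ : (|h| / J + s) ^ 2 < ρ := by
    rcases hh.lt_or_gt with hneg | hpos
    · have : (|h| / J + s) ^ 2 = (-h / J + s) ^ 2 := by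
        rw [abs_of_neg hneg]; try ring
      rw [this]; exact hmp2
    · have : (|h| / J + s) ^ 2 = (-h / J - s) ^ 2 := by
        rw [abs_of_pos hpos]; try ring
      rw [this]; exact hmm2
  have hBρ : (|h| / J - s) ^ 2 < ρ := by
    rcases hh.lt_or_gt with hneg | hpos
    · have : (|h| / J - s) ^ 2 = (-h / J - s) ^ 2 := by
        rw [abs_of_neg hneg]; try ring
      rw [this]; exact hmm2
    · have : (|h| / J - s) ^ 2 = (-h / J + s) ^ 2 := by
        rw [abs_of_pos hpos]; try ring
      rw [this]; exact hmp2
  have hA' : 0 < ρ - (|h| / J + s) ^ 2 := by linarith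
  have hB' : 0 < ρ - (|h| / J - s) ^ 2 := by linarith
  have hBA : ρ - (|h| / J + s) ^ 2 < ρ - (|h| / J - s) ^ 2 := by nlinarith
  have hRpos : 0 < (ρ - (|h| / J + s) ^ 2) / (ρ - (|h| / J - s) ^ 2) := div_pos hA' hB'
  have hRabs : |(ρ - (|h| / J + s) ^ 2) / (ρ - (|h| / J - s) ^ 2)| =
      (ρ - (|h| / J + s) ^ 2) / (ρ - (|h| / J - s) ^ 2) := abs_of_pos hRpos
  refine ⟨?_, by rw [hRabs]; exact (div_lt_one hB').mpr hBA⟩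
  have hrpow : |(ρ - (|h| / J + s) ^ 2) / (ρ - (|h| / J - s) ^ 2)| ^ (((N : ℝ) - 3) / 2) =
      (ρ - (|h| / J + s) ^ 2) ^ (((N : ℝ) - 3) / 2) /
        (ρ - (|h| / J - s) ^ 2) ^ (((N : ℝ) - 3) / 2) := by
    rw [hRabs, Real.div_rpow hA'.le hB'.le]
  rw [hrpow]
  unfold mcEnergy
  simp only
  rw [← hs_def]
  rcases hh.lt_or_gt with hneg | hpos
  · -- h < 0 : good magnetization is m = -h/J - s
    have hm' : m = -h / J - s := by
      rw [hm, Real.sign_of_neg hneg]; try ring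
    have hZp : Zmc N (-h / J + s) ρ = (ρ - (|h| / J + s) ^ 2) ^ (((N : ℝ) - 3) / 2) := by
      unfold Zmc
      congr 2
      rw [abs_of_neg hneg]; try ring
    have hZm : Zmc N (-h / J - s) ρ = (ρ - (|h| / J - s) ^ 2) ^ (((N : ℝ) - 3) / 2) := by
      unfold Zmc
      congr 2
      rw [abs_of_neg hneg]; try ring
    rw [hm', hZp, hZm, add_comm (ENNReal.ofReal _ • _), add_comm
      ((ρ - (|h| / J + s) ^ 2) ^ (((N : ℝ) - 3) / 2))]
    exact core_combo _ _ f hintm hintp K hKm hKp _ _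
      (Real.rpow_pos_of_pos hB' _) (Real.rpow_pos_of_pos hA' _)
  · -- h > 0 : good magnetization is m = -h/J + s
    have hm' : m = -h / J + s := by
      rw [hm, Real.sign_of_pos hpos]; try ring
    have hZp : Zmc N (-h / J + s) ρ = (ρ - (|h| / J - s) ^ 2) ^ (((N : ℝ) - 3) / 2) := by
      unfold Zmc
      congr 2
      rw [abs_of_pos hpos]; try ring
    have hZm : Zmc N (-h / J - s) ρ = (ρ - (|h| / J + s) ^ 2) ^ (((N : ℝ) - 3) / 2) := by
      unfold Zmc
      congr 2
      rw [abs_of_pos hpos]; try ring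
    rw [hm', hZp, hZm]
    exact core_combo _ _ f hintp hintm K hKp hKm _ _
      (Real.rpow_pos_of_pos hB' _) (Real.rpow_pos_of_pos hA' _)
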